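/- In the augmented Arnoldi setting with W_{:,1} = (1/β)·r⁰ ∈ G_j ∩ N(Pᴴ), range(V⁰) ⊆ G_j, Y_{:,i} = Pᴴ·A·W_{:,i} and the recurrence A·W_{:,1:m} = V⁰·Z⁻¹·Y_{:,1:m} + W_{:,1:(m+1)}·H, all columns of W lie in G_j ∩ N(Pᴴ) and A·W_{:,1:m} has all columns in G_j. -/

import Mathlib

/-- In the augmented Arnoldi setting all basis vectors lie in `G_j ∩ N(Pᴴ)`,
and their images under `A` lie in `G_j`. -/
theorem stmt_15 {s m : ℕ} {E : Type*} [NormedAddCommGroup E] [InnerProductSpace ℂ E]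
    (A : Module.End ℂ E) (p : Fin s → E)
    (G : Submodule ℂ E)
    (hG : ∀ x ∈ G, (∀ q, (inner ℂ (p q) x : ℂ) = 0) → A x ∈ G)
    (v : Fin s → E) (hv : ∀ q, v q ∈ G)
    (Z : Matrix (Fin s) (Fin s) ℂ)
    (hZ : Z = Matrix.of fun i q => (inner ℂ (p i) (v q) : ℂ))
    (hZu : IsUnit Z)
    (w : Fin (m + 1) → E)
    (hw0 : w 0 ∈ G) (hw0P : ∀ q, (inner ℂ (p q) (w 0) : ℂ) = 0)
    (Y : Matrix (Fin s) (Fin m) ℂ)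
    (hY : ∀ (q : Fin s) (i : Fin m), Y q i = (inner ℂ (p q) (A (w i.castSucc)) : ℂ))
    (H : Matrix (Fin (m + 1)) (Fin m) ℂ)
    (hHess : ∀ (i : Fin m) (j : Fin (m + 1)), (i : ℕ) + 1 < (j : ℕ) → H j i = 0)
    (hsub : ∀ i : Fin m, H i.succ i ≠ 0)
    (hrec : ∀ i : Fin m,
      A (w i.castSucc) = ∑ q, (Z⁻¹ * Y) q i • v q + ∑ j, H j i • w j) :
    (∀ j, w j ∈ G ∧ ∀ q, (inner ℂ (p q) (w j) : ℂ) = 0) ∧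
    ∀ i : Fin m, A (w i.castSucc) ∈ G := by
  have hZdet : IsUnit Z.det := (Matrix.isUnit_iff_isUnit_det Z).mp hZu
  have hZZ : Z * Z⁻¹ = 1 := Matrix.mul_nonsing_inv Z hZdet
  have hZY : Z * (Z⁻¹ * Y) = Y := by rw [← Matrix.mul_assoc, hZZ, Matrix.one_mul]
  -- inner product of p q with the V-correction term is Y q i
  have hinnerV : ∀ (q : Fin s) (i : Fin m),
      (inner ℂ (p q) (∑ q', (Z⁻¹ * Y) q' i • v q') : ℂ) = Y q i := by
    intro q i
    rw [inner_sum]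
    have : ∀ q', (inner ℂ (p q) ((Z⁻¹ * Y) q' i • v q') : ℂ)
        = Z q q' * (Z⁻¹ * Y) q' i := by
      intro q'
      rw [inner_smul_right, hZ]
      ring_nf
      rfl
    rw [Finset.sum_congr rfl fun q' _ => this q']
    have := congrFun (congrFun hZY q) i
    simpa [Matrix.mul_apply] using this
  have main : ∀ n : ℕ, ∀ j : Fin (m + 1), (j : ℕ) ≤ n →
      w j ∈ G ∧ ∀ q, (inner ℂ (p q) (w j) : ℂ) = 0 := by
    intro n
    induction n with
    | zero =>
      intro j hj
      have : j = 0 := Fin.ext (Nat.le_zero.mp hj)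
      rw [this]
      exact ⟨hw0, hw0P⟩
    | succ n ih =>
      intro j hj
      rcases Nat.lt_or_ge (j : ℕ) (n + 1) with h | h
      · exact ih j (Nat.lt_succ_iff.mp h)
      · have hjn : (j : ℕ) = n + 1 := le_antisymm hj h
        have hnm : n < m := by have := j.isLt; omega
        set i : Fin m := ⟨n, hnm⟩ with hidef
        have hji : j = i.succ := Fin.ext (by simp [hjn, hidef])
        have hcs : ((i.castSucc : Fin (m + 1)) : ℕ) = n := rfl
        obtain ⟨hGi, hPi⟩ := ih i.castSucc (le_of_eq hcs)
        have hAwi : A (w i.castSucc) ∈ G := hG _ hGi hPi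
        -- split the W-sum
        have hsplit : ∑ k, H k i • w k
            = H i.succ i • w i.succ + ∑ k ∈ Finset.univ.erase i.succ, H k i • w k := by
          exact (Finset.add_sum_erase _ (fun k => H k i • w k) (Finset.mem_univ i.succ)).symm
        have hSmem : ∀ k ∈ Finset.univ.erase i.succ,
            (H k i • w k ∈ G ∧ ∀ q, (inner ℂ (p q) (H k i • w k) : ℂ) = 0) := by
          intro k hk
          rcases Nat.lt_or_ge (k : ℕ) (n + 1) with hk1 | hk1
          · obtain ⟨h1, h2⟩ := ih k (Nat.lt_succ_iff.mp hk1)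
            exact ⟨G.smul_mem _ h1, fun q => by rw [inner_smul_right, h2, mul_zero]⟩
          · have hkne : k ≠ i.succ := Finset.ne_of_mem_erase hk
            have : (i : ℕ) + 1 < (k : ℕ) := by
              have : (k : ℕ) ≠ n + 1 := fun hc => hkne (Fin.ext (by simp [hc, hidef]))
              simp only [hidef]
              omega
            rw [hHess i k this]
            exact ⟨by simp, fun q => by simp⟩
        have hSG : ∑ k ∈ Finset.univ.erase i.succ, H k i • w k ∈ G :=
          Submodule.sum_mem G fun k hk => (hSmem k hk).1
        have hSP : ∀ q, (inner ℂ (p q) (∑ k ∈ Finset.univ.erase i.succ, H k i • w k) : ℂ) = 0 := by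
          intro q
          rw [inner_sum]
          exact Finset.sum_eq_zero fun k hk => (hSmem k hk).2 q
        have hVG : ∑ q', (Z⁻¹ * Y) q' i • v q' ∈ G :=
          Submodule.sum_mem G fun q' _ => G.smul_mem _ (hv q')
        have hkey : H i.succ i • w i.succ
            = A (w i.castSucc) - ∑ q', (Z⁻¹ * Y) q' i • v q'
              - ∑ k ∈ Finset.univ.erase i.succ, H k i • w k := by
          have := hrec i
          rw [hsplit] at this
          rw [this]; abel
        have hmemG : w i.succ ∈ G := by
          have h1 : H i.succ i • w i.succ ∈ G := by
            rw [hkey]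
            exact Submodule.sub_mem G (Submodule.sub_mem G hAwi hVG) hSG
          exact (Submodule.smul_mem_iff G (hsub i)).mp h1
        have hmemP : ∀ q, (inner ℂ (p q) (w i.succ) : ℂ) = 0 := by
          intro q
          have h1 : (inner ℂ (p q) (H i.succ i • w i.succ) : ℂ) = 0 := by
            rw [hkey, inner_sub_right, inner_sub_right, hinnerV, hSP, ← hY, sub_zero, sub_self]
          rw [inner_smul_right] at h1
          exact (mul_eq_zero.mp h1).resolve_left (hsub i)
        rw [hji]
        exact ⟨hmemG, hmemP⟩
  refine ⟨fun j => main m j (Nat.lt_succ_iff.mp j.isLt), fun i => ?_⟩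
  obtain ⟨h1, h2⟩ := main m i.castSucc (Nat.lt_succ_iff.mp i.castSucc.isLt)
  exact hG _ h1 h2
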